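/- Let R = (p,q) in ℝⁿ₊ and R' = (p',q') in ℝⁿ'₊ be normalized pairs (|p| = |q| = |p'| = |q'| = 1) with q and q' strictly positive entrywise, and let λ ∈ [0,1] and z ≥ 0. If (p,q) ≻ (λp', zq') holds then λ*_z(R→R') · z*_λ(R→R') ≤ λz; if (p,q) ≻ (λp', zq') fails then λ*_z(R→R') · z*_λ(R→R') ≥ λz. -/

import Mathlib

open scoped BigOperators

/-- A test: a vector with entries in `[0,1]`. -/
def IsTest {ι : Type*} [Fintype ι] (t : ι → ℝ) : Prop := ∀ i, 0 ≤ t i ∧ t i ≤ 1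

/-- Dot product of two vectors. -/
def dot {ι : Type*} [Fintype ι] (t p : ι → ℝ) : ℝ := ∑ i, t i * p i

/-- `beta x p q` is the infimum of `t ⬝ q` over tests `t` with `t ⬝ p ≥ x`,
with value `⊤` (`+∞`) when no feasible test exists. -/
noncomputable def beta {ι : Type*} [Fintype ι] (x : ℝ) (p q : ι → ℝ) : EReal :=
  sInf {y : EReal | ∃ t : ι → ℝ, IsTest t ∧ x ≤ dot t p ∧ y = ((dot t q : ℝ) : EReal)}

/-- `alpha y p q` is the supremum of `t ⬝ p` over tests `t` with `t ⬝ q ≤ y`. -/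
noncomputable def alpha {ι : Type*} [Fintype ι] (y : ℝ) (p q : ι → ℝ) : ℝ :=
  sSup {x : ℝ | ∃ t : ι → ℝ, IsTest t ∧ dot t q ≤ y ∧ x = dot t p}

/-- A nonnegative matrix all of whose column sums are at most `1`. -/
def Substochastic {ι' ι : Type*} [Fintype ι'] [Fintype ι] (M : Matrix ι' ι ℝ) : Prop :=
  (∀ i j, 0 ≤ M i j) ∧ ∀ j, ∑ i, M i j ≤ 1

/-- A nonnegative matrix all of whose column sums equal `1`. -/
def Stochastic {ι' ι : Type*} [Fintype ι'] [Fintype ι] (M : Matrix ι' ι ℝ) : Prop :=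
  (∀ i j, 0 ≤ M i j) ∧ ∀ j, ∑ i, M i j = 1

/-- Relative submajorization: `(p,q) ≻ (p',q')`. -/
def SubMaj {ι ι' : Type*} [Fintype ι] [Fintype ι'] (p q : ι → ℝ) (p' q' : ι' → ℝ) : Prop :=
  ∃ M : Matrix ι' ι ℝ, Substochastic M ∧
    (∀ i, p' i ≤ M.mulVec p i) ∧ (∀ i, M.mulVec q i ≤ q' i)

/-- Relative majorization: `(p,q) ≽ (p',q')`. -/
def RelMaj {ι ι' : Type*} [Fintype ι] [Fintype ι'] (p q : ι → ℝ) (p' q' : ι' → ℝ) : Prop :=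
  ∃ M : Matrix ι' ι ℝ, Stochastic M ∧ M.mulVec p = p' ∧ M.mulVec q = q'

/-- Approximate relative submajorization: `(p,q) ≻_{ε,η} (p',q')`. -/
def ApproxSubMaj {ι ι' : Type*} [Fintype ι] [Fintype ι'] (ε η : ℝ)
    (p q : ι → ℝ) (p' q' : ι' → ℝ) : Prop :=
  ∃ (M : Matrix ι' ι ℝ) (a b : ι' → ℝ), Substochastic M ∧
    (∀ i, 0 ≤ a i) ∧ (∀ i, 0 ≤ b i) ∧ (∑ i, a i) ≤ ε ∧ (∑ i, b i) ≤ η ∧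
    (∀ i, p' i - a i ≤ M.mulVec p i) ∧ (∀ i, M.mulVec q i ≤ q' i + b i)

/-- Partial sum `∑_{j=1}^k v_{π(j)}` of the first `k` entries of `v` in the order given by `π`. -/
def psum {n : ℕ} (v : Fin n → ℝ) (π : Equiv.Perm (Fin n)) (k : ℕ) : ℝ :=
  ∑ j ∈ Finset.univ.filter (fun j : Fin n => (j : ℕ) < k), v (π j)

/-- `λ*_z(R→R')`: the largest `λ ∈ [0,1]` with `(p,q) ≻ (λ p', z q')`. -/
noncomputable def lambdaStar {ι ι' : Type*} [Fintype ι] [Fintype ι'] (z : ℝ)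
    (p q : ι → ℝ) (p' q' : ι' → ℝ) : ℝ :=
  sSup {lam : ℝ | 0 ≤ lam ∧ lam ≤ 1 ∧
    SubMaj p q (fun i => lam * p' i) (fun i => z * q' i)}

/-- `z*_λ(R→R')`: the smallest `z ≥ 0` with `(p,q) ≻ (λ p', z q')`. -/
noncomputable def zStar {ι ι' : Type*} [Fintype ι] [Fintype ι'] (lam : ℝ)
    (p q : ι → ℝ) (p' q' : ι' → ℝ) : ℝ :=
  sInf {z : ℝ | 0 ≤ z ∧ SubMaj p q (fun i => lam * p' i) (fun i => z * q' i)}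

/-- `ε*_z(R→R')`: the smallest error of the first kind. -/
noncomputable def epsStar {ι ι' : Type*} [Fintype ι] [Fintype ι'] (z : ℝ)
    (p q : ι → ℝ) (p' q' : ι' → ℝ) : ℝ :=
  sInf {ε : ℝ | 0 ≤ ε ∧ ApproxSubMaj ε 0 p q p' (fun i => z * q' i)}

/-- `η̂*_z(R→R')`: the smallest error of the second kind. -/
noncomputable def etaStar {ι ι' : Type*} [Fintype ι] [Fintype ι'] (z : ℝ)
    (p q : ι → ℝ) (p' q' : ι' → ℝ) : ℝ :=
  sInf {η : ℝ | 0 ≤ η ∧ ApproxSubMaj 0 η p q p' (fun i => z * q' i)}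

/-- Relative entropy `D(u,v) = Σ u_k ln(u_k/v_k)` (with `0 ln 0 = 0`). -/
noncomputable def relEnt {ι : Type*} [Fintype ι] (u v : ι → ℝ) : ℝ :=
  ∑ k, u k * Real.log (u k / v k)


lemma submaj_scale {ι ι' : Type*} [Fintype ι] [Fintype ι'] {p q : ι → ℝ} {p' q' : ι' → ℝ}
    {a b c : ℝ} (hc0 : 0 ≤ c) (hc1 : c ≤ 1)
    (h : SubMaj p q (fun i => a * p' i) (fun i => b * q' i)) :
    SubMaj p q (fun i => (c * a) * p' i) (fun i => (c * b) * q' i) := by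
  obtain ⟨M, ⟨hM0, hM1⟩, hMp, hMq⟩ := h
  refine ⟨c • M, ⟨fun i j => mul_nonneg hc0 (hM0 i j), fun j => ?_⟩, fun i => ?_, fun i => ?_⟩
  · simp only [Matrix.smul_apply, smul_eq_mul, ← Finset.mul_sum]
    calc c * ∑ i, M i j ≤ 1 * 1 :=
          mul_le_mul hc1 (hM1 j) (Finset.sum_nonneg fun i _ => hM0 i j) zero_le_one
      _ = 1 := one_mul 1
  · rw [Matrix.smul_mulVec]
    simpa [mul_assoc] using mul_le_mul_of_nonneg_left (hMp i) hc0
  · rw [Matrix.smul_mulVec]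
    simpa [mul_assoc] using mul_le_mul_of_nonneg_left (hMq i) hc0

lemma submaj_mono {ι ι' : Type*} [Fintype ι] [Fintype ι'] {p q : ι → ℝ} {p' q' : ι' → ℝ}
    {a a' b b' : ℝ} (hp' : ∀ i, 0 ≤ p' i) (hq' : ∀ i, 0 ≤ q' i)
    (ha : a' ≤ a) (hb : b ≤ b')
    (h : SubMaj p q (fun i => a * p' i) (fun i => b * q' i)) :
    SubMaj p q (fun i => a' * p' i) (fun i => b' * q' i) := by
  obtain ⟨M, hM, hMp, hMq⟩ := h
  exact ⟨M, hM, fun i => le_trans (mul_le_mul_of_nonneg_right ha (hp' i)) (hMp i),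
    fun i => le_trans (hMq i) (mul_le_mul_of_nonneg_right hb (hq' i))⟩

lemma submaj_zero {ι ι' : Type*} [Fintype ι] [Fintype ι'] (p q : ι → ℝ) (p' q' : ι' → ℝ)
    {z : ℝ} (hz : 0 ≤ z) (hq' : ∀ i, 0 ≤ q' i) :
    SubMaj p q (fun i => 0 * p' i) (fun i => z * q' i) := by
  refine ⟨0, ⟨fun i j => le_refl 0, fun j => by simp⟩, fun i => ?_, fun i => ?_⟩
  · simp [Matrix.zero_mulVec]
  · simp only [Matrix.zero_mulVec, Pi.zero_apply]
    exact mul_nonneg hz (hq' i)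

lemma submaj_big {n n' : ℕ} {p q : Fin n → ℝ} {p' q' : Fin n' → ℝ}
    (hp' : ∀ i, 0 ≤ p' i) (hq' : ∀ i, 0 < q' i)
    (hpn : ∑ i, p i = 1) (hqn : ∑ i, q i = 1) (hpn' : ∑ i, p' i = 1)
    {lam : ℝ} (hlam1 : lam ≤ 1) :
    SubMaj p q (fun i => lam * p' i) (fun i => (∑ i, p' i / q' i) * q' i) := by
  refine ⟨Matrix.of (fun i _ => p' i), ⟨fun i j => hp' i, fun j => ?_⟩, fun i => ?_, fun i => ?_⟩
  · simpa using hpn'.le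
  · have : (Matrix.of (fun i (_ : Fin n) => p' i)).mulVec p i = p' i := by
      simp [Matrix.mulVec, dotProduct, ← Finset.mul_sum, hpn]
    rw [this]
    exact mul_le_of_le_one_left (hp' i) hlam1
  · have : (Matrix.of (fun i (_ : Fin n) => p' i)).mulVec q i = p' i := by
      simp [Matrix.mulVec, dotProduct, ← Finset.mul_sum, hqn]
    rw [this]
    rw [← div_le_iff₀ (hq' i)]
    exact Finset.single_le_sum (f := fun k => p' k / q' k)
      (fun k _ => div_nonneg (hp' k) (hq' k).le) (Finset.mem_univ i)

/-- Bootstrapping from a feasible or infeasible pair `(λ,z)`: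
feasibility gives `λ*_z z*_λ ≤ λz`, infeasibility gives `λ*_z z*_λ ≥ λz`. -/
theorem stmt_17 {n n' : ℕ} (p q : Fin n → ℝ) (p' q' : Fin n' → ℝ)
    (hp : ∀ i, 0 ≤ p i) (hq : ∀ i, 0 < q i)
    (hp' : ∀ i, 0 ≤ p' i) (hq' : ∀ i, 0 < q' i)
    (hpn : ∑ i, p i = 1) (hqn : ∑ i, q i = 1)
    (hpn' : ∑ i, p' i = 1) (hqn' : ∑ i, q' i = 1)
    (lam z : ℝ) (hlam0 : 0 ≤ lam) (hlam1 : lam ≤ 1) (hz : 0 ≤ z) :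
    (SubMaj p q (fun i => lam * p' i) (fun i => z * q' i) →
      lambdaStar z p q p' q' * zStar lam p q p' q' ≤ lam * z) ∧
    (¬ SubMaj p q (fun i => lam * p' i) (fun i => z * q' i) →
      lam * z ≤ lambdaStar z p q p' q' * zStar lam p q p' q') := by
  classical
  set S : Set ℝ := {l : ℝ | 0 ≤ l ∧ l ≤ 1 ∧
      SubMaj p q (fun i => l * p' i) (fun i => z * q' i)} with hSdef
  set T : Set ℝ := {z₀ : ℝ | 0 ≤ z₀ ∧
      SubMaj p q (fun i => lam * p' i) (fun i => z₀ * q' i)} with hTdef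
  have hLS : lambdaStar z p q p' q' = sSup S := rfl
  have hZS : zStar lam p q p' q' = sInf T := rfl
  have hq'le : ∀ i, 0 ≤ q' i := fun i => (hq' i).le
  have hS0 : (0 : ℝ) ∈ S := ⟨le_refl 0, zero_le_one, submaj_zero p q p' q' hz hq'le⟩
  have hSbdd : BddAbove S := ⟨1, fun x hx => hx.2.1⟩
  have hSne : S.Nonempty := ⟨0, hS0⟩
  have hls0 : 0 ≤ sSup S := le_csSup hSbdd hS0
  set Z : ℝ := ∑ i, p' i / q' i with hZdef
  have hZT : Z ∈ T := ⟨Finset.sum_nonneg fun k _ => div_nonneg (hp' k) (hq' k).le,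
    submaj_big hp' hq' hpn hqn hpn' hlam1⟩
  have hTbdd : BddBelow T := ⟨0, fun x hx => hx.1⟩
  have hTne : T.Nonempty := ⟨Z, hZT⟩
  have hzs0 : 0 ≤ sInf T := le_csInf hTne fun x hx => hx.1
  rw [hLS, hZS]
  constructor
  · intro h
    have hzT : z ∈ T := ⟨hz, h⟩
    have hzstar_le : sInf T ≤ z := csInf_le hTbdd hzT
    have key : ∀ l ∈ S, l * sInf T ≤ lam * z := by
      intro l hl
      obtain ⟨hl0, hl1, hlfeas⟩ := hl
      by_cases hcase : l ≤ lam
      · exact mul_le_mul hcase hzstar_le hzs0 hlam0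
      · push_neg at hcase
        have hlpos : 0 < l := lt_of_le_of_lt hlam0 hcase
        by_cases hlamz : lam = 0
        · have h0T : (0 : ℝ) ∈ T := ⟨le_refl 0, by
            rw [hlamz]; exact submaj_zero p q p' q' (le_refl 0) hq'le⟩
          have hle : sInf T ≤ 0 := csInf_le hTbdd h0T
          have hzeq : sInf T = 0 := le_antisymm hle hzs0
          rw [hzeq, mul_zero]
          exact mul_nonneg hlam0 hz
        · have hlampos : 0 < lam := lt_of_le_of_ne hlam0 (Ne.symm hlamz)
          have hc0 : (0 : ℝ) ≤ lam / l := div_nonneg hlam0 hlpos.le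
          have hc1 : lam / l ≤ 1 := (div_le_one hlpos).mpr hcase.le
          have hsc := submaj_scale hc0 hc1 hlfeas
          have hcl : lam / l * l = lam := div_mul_cancel₀ lam hlpos.ne'
          rw [hcl] at hsc
          have hmem : lam / l * z ∈ T := ⟨mul_nonneg hc0 hz, hsc⟩
          have hz2 : sInf T ≤ lam / l * z := csInf_le hTbdd hmem
          calc l * sInf T ≤ l * (lam / l * z) := mul_le_mul_of_nonneg_left hz2 hlpos.le
            _ = lam * z := by field_simp
    by_cases hzs : sInf T = 0
    · rw [hzs, mul_zero]
      exact mul_nonneg hlam0 hz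
    · have hzs' : 0 < sInf T := lt_of_le_of_ne hzs0 (Ne.symm hzs)
      have hsup : sSup S ≤ lam * z / sInf T :=
        csSup_le hSne fun l hl => (le_div_iff₀ hzs').mpr (key l hl)
      calc sSup S * sInf T ≤ lam * z / sInf T * sInf T :=
            mul_le_mul_of_nonneg_right hsup hzs0
        _ = lam * z := div_mul_cancel₀ _ hzs
  · intro h
    have key : ∀ z₀ ∈ T, lam * z ≤ sSup S * z₀ := by
      intro z₀ hz₀
      obtain ⟨hz₀0, hfeas⟩ := hz₀
      by_cases hz' : z = 0
      · rw [hz', mul_zero]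
        exact mul_nonneg hls0 hz₀0
      · have hzpos : 0 < z := lt_of_le_of_ne hz (Ne.symm hz')
        have hz₀z : z < z₀ := by
          by_contra hle
          push_neg at hle
          exact h (submaj_mono hp' hq'le (le_refl lam) hle hfeas)
        have hz₀pos : 0 < z₀ := lt_trans hzpos hz₀z
        have hc0 : (0 : ℝ) ≤ z / z₀ := div_nonneg hz hz₀pos.le
        have hc1 : z / z₀ ≤ 1 := (div_le_one hz₀pos).mpr hz₀z.le
        have hsc := submaj_scale hc0 hc1 hfeas
        have hcz : z / z₀ * z₀ = z := div_mul_cancel₀ z hz₀pos.ne'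
        rw [hcz] at hsc
        have hmem : z / z₀ * lam ∈ S :=
          ⟨mul_nonneg hc0 hlam0, mul_le_one₀ hc1 hlam0 hlam1, hsc⟩
        have hle : z / z₀ * lam ≤ sSup S := le_csSup hSbdd hmem
        calc lam * z = (z / z₀ * lam) * z₀ := by field_simp
          _ ≤ sSup S * z₀ := mul_le_mul_of_nonneg_right hle hz₀0
    by_cases hls : sSup S = 0
    · have := key Z hZT
      rw [hls, zero_mul] at this ⊢
      exact this
    · have hls' : 0 < sSup S := lt_of_le_of_ne hls0 (Ne.symm hls)
      have hinf : lam * z / sSup S ≤ sInf T :=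
        le_csInf hTne fun z₀ hz₀ => (div_le_iff₀' hls').mpr (key z₀ hz₀)
      calc lam * z = lam * z / sSup S * sSup S := (div_mul_cancel₀ _ hls).symm
        _ ≤ sInf T * sSup S := mul_le_mul_of_nonneg_right hinf hls'.le
        _ = sSup S * sInf T := mul_comm _ _
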